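/- In a finite state space where the goal is reachable from every state, an LRTA*-style agent that maintains a heuristic bounded above by w·h* for a fixed w ≥ 1 (where h* is finite everywhere) and whose execution, if infinite, forces some heuristic value in the recurrent set to increase by at least δ > 0 infinitely often, must reach the goal in finitely many steps. -/

import Mathlib

/-- In a finite state space where the goal is reachable from everywhere
(h* finite everywhere), an LRTA*-style agent whose heuristic is nondecreasing over time
and always bounded by w·h* (w ≥ 1), and whose execution, if it never reaches the goal,
forces some infinitely-visited state's heuristic to increase by at least δ > 0
infinitely often, must reach the goal in finitely many steps. -/
theorem lrta_reaches_goal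
    {S : Type*} [Fintype S]
    (goal : S) (hstar : S → ℝ) (w δ : ℝ)
    (path : ℕ → S) (h : ℕ → S → ℝ)
    (hw : 1 ≤ w) (hδ : 0 < δ)
    (hbound : ∀ t s, h t s ≤ w * hstar s)
    (hmono : ∀ t s, h t s ≤ h (t + 1) s)
    (hforce : (∀ t, path t ≠ goal) →
      ∃ s, {t | path t = s}.Infinite ∧ {t | h t s + δ ≤ h (t + 1) s}.Infinite) :
    ∃ T, path T = goal := by
  by_contra hc
  push_neg at hc
  obtain ⟨s, _, hinc⟩ := hforce hc
  have hmono' : Monotone (fun t => h t s) := monotone_nat_of_le_succ (fun t => hmono t s)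
  have key : ∀ n : ℕ, ∃ t, h 0 s + n * δ ≤ h t s := by
    intro n
    induction n with
    | zero => exact ⟨0, by simp⟩
    | succ n ih =>
      obtain ⟨t, ht⟩ := ih
      obtain ⟨t', ht', htt'⟩ := hinc.exists_gt t
      refine ⟨t' + 1, ?_⟩
      have h1 : h t s ≤ h t' s := hmono' htt'.le
      have h2 : h t' s + δ ≤ h (t' + 1) s := ht'
      push_cast
      linarith
  obtain ⟨n, hn⟩ := exists_nat_gt ((w * hstar s - h 0 s) / δ)
  obtain ⟨t, ht⟩ := key n
  have hb := hbound t s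
  have : (w * hstar s - h 0 s) / δ * δ < n * δ := by
    exact mul_lt_mul_of_pos_right hn hδ
  rw [div_mul_cancel₀ _ hδ.ne'] at this
  linarith
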